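/- Let n ≥ 2, D ≥ 2, ρ ≥ D^{-1}. Cover the unit sphere S^{n−1} by a family Θ of caps θ of radius 1/D, and for each θ let θ* denote the slab of dimensions D^{-1} × 1 × ⋯ × 1 through the origin perpendicular to the direction of θ, intersected with the unit ball. Then every point ω ∈ ℝⁿ with ρ ≤ |ω| ≤ 1 belongs to at most C(n)·ρ^{−n}·D^{n−2} of the slabs θ*. -/

import Mathlib

open Set

open MeasureTheory Metric
open scoped ENNReal

private lemma pow_sub_pow_le_aux {x y : ℝ} (hy : 0 ≤ y) (hxy : y ≤ x) (k : ℕ) :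
    x ^ (k + 1) - y ^ (k + 1) ≤ (k + 1 : ℝ) * x ^ k * (x - y) := by
  induction k with
  | zero => simp
  | succ k ih =>
    have hx : 0 ≤ x := hy.trans hxy
    have h2 : y ^ (k + 1) ≤ x ^ (k + 1) := pow_le_pow_left₀ hy hxy _
    have h3 : x * (x ^ (k+1) - y ^ (k+1)) ≤ x * ((k + 1 : ℝ) * x ^ k * (x - y)) :=
      mul_le_mul_of_nonneg_left ih hx
    have h5 : y ^ (k+1) * (x - y) ≤ x ^ (k+1) * (x - y) :=
      mul_le_mul_of_nonneg_right h2 (by linarith)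
    have h6 : x ^ (k+1) = x ^ k * x := pow_succ x k
    have h4 : x ^ (k+1+1) - y ^ (k+1+1) =
        x * (x ^ (k+1) - y ^ (k+1)) + y ^ (k+1) * (x - y) := by ring
    have h7 : x * ((k + 1 : ℝ) * x ^ k * (x - y)) = (k + 1 : ℝ) * x ^ (k+1) * (x - y) := by
      rw [h6]; ring
    push_cast
    linarith [h3, h5]

private lemma packing_le {n : ℕ} (hn : 1 ≤ n) (F : Finset (EuclideanSpace ℝ (Fin n)))
    {δ : ℝ} (hδ : 0 < δ)
    (hsep : ∀ v ∈ F, ∀ u ∈ F, v ≠ u → 2 * δ ≤ dist v u)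
    {S : Set (EuclideanSpace ℝ (Fin n))}
    (hsub : ∀ v ∈ F, Metric.ball v δ ⊆ S) :
    (F.card : ℝ≥0∞) * (ENNReal.ofReal (δ ^ n) *
      volume (Metric.ball (0 : EuclideanSpace ℝ (Fin n)) 1)) ≤ volume S := by
  haveI : NeZero n := ⟨by omega⟩
  haveI : Nontrivial (EuclideanSpace ℝ (Fin n)) := by infer_instance
  have hd : ((F : Set (EuclideanSpace ℝ (Fin n)))).PairwiseDisjoint
      fun v => Metric.ball v δ := by
    intro v hv u hu hvu
    exact Metric.ball_disjoint_ball (by linarith [hsep v hv u hu hvu])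
  have h1 : volume (⋃ v ∈ F, Metric.ball v δ) = ∑ v ∈ F, volume (Metric.ball v δ) :=
    measure_biUnion_finset hd fun v _ => measurableSet_ball
  have h2 : ∀ v : EuclideanSpace ℝ (Fin n), volume (Metric.ball v δ) =
      ENNReal.ofReal (δ ^ n) * volume (Metric.ball (0 : EuclideanSpace ℝ (Fin n)) 1) := by
    intro v
    rw [Measure.addHaar_ball volume v hδ.le, finrank_euclideanSpace_fin]
  calc (F.card : ℝ≥0∞) * (ENNReal.ofReal (δ ^ n) *
      volume (Metric.ball (0 : EuclideanSpace ℝ (Fin n)) 1))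
      = ∑ v ∈ F, volume (Metric.ball v δ) := by
        simp [h2, Finset.sum_const, nsmul_eq_mul]
    _ = volume (⋃ v ∈ F, Metric.ball v δ) := h1.symm
    _ ≤ volume S := measure_mono (Set.iUnion₂_subset hsub)

private lemma eucl_norm_sq {ι : Type*} [Fintype ι] (y : EuclideanSpace ℝ ι) :
    ‖y‖ ^ 2 = ∑ i, y i ^ 2 := by
  rw [EuclideanSpace.norm_eq, Real.sq_sqrt (by positivity)]
  simp [Real.norm_eq_abs, sq_abs]

private lemma slab_vol_le {n : ℕ} [NeZero n] (hn : 2 ≤ n) (e : EuclideanSpace ℝ (Fin n))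
    (he : ‖e‖ = 1)
    {w a b : ℝ} (hw : 0 ≤ w) (ha : 0 ≤ a) (hwa : w ≤ a) (hab : a ≤ b) :
    volume {x : EuclideanSpace ℝ (Fin n) | |(inner ℝ e x : ℝ)| ≤ w ∧ a ≤ ‖x‖ ∧ ‖x‖ ≤ b} ≤
      ENNReal.ofReal (2 * w) *
        (ENNReal.ofReal (b ^ (n - 1) - Real.sqrt (a ^ 2 - w ^ 2) ^ (n - 1)) *
          volume (Metric.ball (0 : EuclideanSpace ℝ {i : Fin n // ¬ i = 0}) 1)) := by
  set E' := EuclideanSpace ℝ {i : Fin n // ¬ i = 0} with hE'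
  set a' := Real.sqrt (a ^ 2 - w ^ 2) with ha'def
  have ha'0 : 0 ≤ a' := Real.sqrt_nonneg _
  have haw : 0 ≤ a ^ 2 - w ^ 2 := by nlinarith
  have ha'sq : a' ^ 2 = a ^ 2 - w ^ 2 := Real.sq_sqrt haw
  have ha'a : a' ≤ a := by nlinarith
  clear_value a'
  have hb0 : 0 ≤ b := ha.trans hab
  have ha'b : a' ≤ b := ha'a.trans hab
  -- orthonormal basis with first vector e
  have hcard : Module.finrank ℝ (EuclideanSpace ℝ (Fin n)) = Fintype.card (Fin n) := by
    simp [finrank_euclideanSpace]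
  have horth : Orthonormal ℝ (Set.restrict {(0 : Fin n)} (fun _ => e)) := by
    constructor
    · intro i; exact he
    · intro i j hij
      exact absurd (Subtype.ext (by
        have h1 := i.2; have h2 := j.2
        simp only [Set.mem_singleton_iff] at h1 h2
        rw [h1, h2])) hij
  obtain ⟨bb, hbb⟩ := horth.exists_orthonormalBasis_extension_of_card_eq hcard
  have hbb0 : bb 0 = e := hbb 0 rfl
  -- step 1 : move to coordinates
  set T' : Set (EuclideanSpace ℝ (Fin n)) := {y | |y 0| ≤ w ∧ a ≤ ‖y‖ ∧ ‖y‖ ≤ b} with hT'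
  have hsub1 : {x : EuclideanSpace ℝ (Fin n) | |(inner ℝ e x : ℝ)| ≤ w ∧ a ≤ ‖x‖ ∧ ‖x‖ ≤ b}
      ⊆ bb.repr ⁻¹' T' := by
    intro x hx
    obtain ⟨h1, h2, h3⟩ := hx
    have hx0 : bb.repr x 0 = (inner ℝ e x : ℝ) := by
      rw [← hbb0]; exact bb.repr_apply_apply x 0
    refine ⟨?_, ?_, ?_⟩
    · show |bb.repr x 0| ≤ w
      rw [hx0]; exact h1
    · simpa [LinearIsometryEquiv.norm_map] using h2
    · simpa [LinearIsometryEquiv.norm_map] using h3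
  have hmeas0 : Measurable fun y : EuclideanSpace ℝ (Fin n) => y 0 :=
    (measurable_pi_apply 0).comp ((MeasurableEquiv.toLp 2 (Fin n → ℝ)).symm).measurable
  have hmeasT' : MeasurableSet T' := by
    refine MeasurableSet.inter (measurableSet_le hmeas0.abs measurable_const) ?_
    exact MeasurableSet.inter (measurableSet_le measurable_const measurable_norm)
      (measurableSet_le measurable_norm measurable_const)
  have hv1 : volume {x : EuclideanSpace ℝ (Fin n) |
      |(inner ℝ e x : ℝ)| ≤ w ∧ a ≤ ‖x‖ ∧ ‖x‖ ≤ b} ≤ volume T' := by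
    calc volume {x : EuclideanSpace ℝ (Fin n) |
        |(inner ℝ e x : ℝ)| ≤ w ∧ a ≤ ‖x‖ ∧ ‖x‖ ≤ b}
        ≤ volume (bb.repr ⁻¹' T') := measure_mono hsub1
      _ = volume T' := bb.measurePreserving_repr.measure_preimage
            hmeasT'.nullMeasurableSet
  -- step 2 : to the pi space
  set T'' : Set (Fin n → ℝ) :=
    {g | |g 0| ≤ w ∧ a ^ 2 ≤ ∑ i, g i ^ 2 ∧ ∑ i, g i ^ 2 ≤ b ^ 2} with hT''
  have hkey : ∀ y : EuclideanSpace ℝ (Fin n),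
      (a ≤ ‖y‖ ↔ a ^ 2 ≤ ∑ i, y i ^ 2) ∧ (‖y‖ ≤ b ↔ ∑ i, y i ^ 2 ≤ b ^ 2) := by
    intro y
    rw [← eucl_norm_sq y]
    exact ⟨(pow_le_pow_iff_left₀ ha (norm_nonneg y) two_ne_zero).symm,
      (pow_le_pow_iff_left₀ (norm_nonneg y) hb0 two_ne_zero).symm⟩
  have hT'eq : T' = ((MeasurableEquiv.toLp 2 (Fin n → ℝ)).symm) ⁻¹' T'' := by
    ext y
    simp only [hT', hT'', Set.mem_preimage, Set.mem_setOf_eq]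
    have happ : ∀ i, ((MeasurableEquiv.toLp 2 (Fin n → ℝ)).symm) y i = y i := fun _ => rfl
    rw [happ 0]
    constructor
    · rintro ⟨h1, h2, h3⟩
      exact ⟨h1, by simpa [happ] using (hkey y).1.1 h2, by simpa [happ] using (hkey y).2.1 h3⟩
    · rintro ⟨h1, h2, h3⟩
      exact ⟨h1, (hkey y).1.2 (by simpa [happ] using h2), (hkey y).2.2 (by simpa [happ] using h3)⟩
  have hmeass : Measurable fun g : Fin n → ℝ => ∑ i, g i ^ 2 :=
    Finset.measurable_sum _ fun i _ => (measurable_pi_apply i).pow_const 2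
  have hmeasT'' : MeasurableSet T'' := by
    refine MeasurableSet.inter (measurableSet_le (measurable_pi_apply 0).abs measurable_const) ?_
    exact MeasurableSet.inter (measurableSet_le measurable_const hmeass)
      (measurableSet_le hmeass measurable_const)
  have hv2 : volume T' = volume T'' := by
    rw [hT'eq]
    exact (EuclideanSpace.volume_preserving_symm_measurableEquiv_toLp (Fin n)).measure_preimage
      hmeasT''.nullMeasurableSet
  -- step 3 : split off coordinate 0
  letI instF0 : Fintype {i : Fin n // i = 0} := Subtype.fintype _
  letI instF1 : Fintype {i : Fin n // ¬ i = 0} := Subtype.fintype _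
  set A : Set ({i : Fin n // i = 0} → ℝ) :=
    Set.pi Set.univ (fun _ => Set.Icc (-w) w) with hA
  set B : Set ({i : Fin n // ¬ i = 0} → ℝ) :=
    {g | a ^ 2 - w ^ 2 ≤ ∑ j, g j ^ 2 ∧ ∑ j, g j ^ 2 ≤ b ^ 2} with hB
  have hmeasA : MeasurableSet A :=
    MeasurableSet.univ_pi fun _ => measurableSet_Icc
  have hmeassB : Measurable fun g : {i : Fin n // ¬ i = 0} → ℝ => ∑ j, g j ^ 2 :=
    Finset.measurable_sum _ fun i _ => (measurable_pi_apply i).pow_const 2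
  have hmeasB : MeasurableSet B :=
    MeasurableSet.inter (measurableSet_le measurable_const hmeassB)
      (measurableSet_le hmeassB measurable_const)
  have hsub2 : T'' ⊆ (MeasurableEquiv.piEquivPiSubtypeProd (fun _ : Fin n => ℝ)
      (fun i => i = 0)) ⁻¹' (A ×ˢ B) := by
    intro g hg
    obtain ⟨h1, h2, h3⟩ := hg
    have hg0 : g 0 ^ 2 ≤ w ^ 2 := by
      have := abs_le.1 h1; nlinarith [this.1, this.2]
    have hsum : ∑ j : {i : Fin n // ¬ i = 0}, g j ^ 2 = (∑ i, g i ^ 2) - g 0 ^ 2 := by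
      have e1 : ∑ i, g i ^ 2 = g 0 ^ 2 + ∑ i ∈ Finset.univ.erase 0, g i ^ 2 :=
        (Finset.add_sum_erase _ _ (Finset.mem_univ 0)).symm
      have e2 : ∑ i ∈ Finset.univ.filter (fun i : Fin n => ¬ i = 0), g i ^ 2
          = ∑ j : {i : Fin n // ¬ i = 0}, g j ^ 2 :=
        Finset.sum_subtype _ (by intro x; simp) (fun i => g i ^ 2)
      have e3 : Finset.univ.filter (fun i : Fin n => ¬ i = 0) = Finset.univ.erase 0 := by
        ext i; simp [Finset.mem_erase]
      rw [← e2, e3]; linarith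
    constructor
    · show (fun j : {i : Fin n // i = 0} => g j.1) ∈ A
      intro j _
      have hj : j.1 = 0 := j.2
      simp only [hj, Set.mem_Icc]
      exact abs_le.1 h1
    · show a ^ 2 - w ^ 2 ≤ ∑ j : {i : Fin n // ¬ i = 0}, g j ^ 2 ∧
        ∑ j : {i : Fin n // ¬ i = 0}, g j ^ 2 ≤ b ^ 2
      rw [hsum]
      constructor
      · linarith
      · nlinarith [sq_nonneg (g 0)]
  have hv3 : volume T'' ≤ volume A * volume B := by
    calc volume T''
        ≤ volume ((MeasurableEquiv.piEquivPiSubtypeProd (fun _ : Fin n => ℝ)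
            (fun i => i = 0)) ⁻¹' (A ×ˢ B)) := measure_mono hsub2
      _ = volume (A ×ˢ B) :=
          (volume_preserving_piEquivPiSubtypeProd (fun _ : Fin n => ℝ)
            (fun i => i = 0)).measure_preimage (hmeasA.prod hmeasB).nullMeasurableSet
      _ = volume A * volume B := by
          rw [← Measure.prod_prod]
          rfl
  -- volume of A
  have hcard1 : Fintype.card {i : Fin n // i = 0} = 1 := Fintype.card_subtype_eq 0
  have hvA : volume A = ENNReal.ofReal (2 * w) := by
    rw [hA, volume_pi_pi]
    simp only [Real.volume_Icc]
    rw [Finset.prod_const, Finset.card_univ, hcard1, pow_one]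
    congr 1; ring
  -- volume of B
  have hvB : volume B ≤ ENNReal.ofReal (b ^ (n - 1) - a' ^ (n - 1)) *
      volume (Metric.ball (0 : E') 1) := by
    have hBeq : ((MeasurableEquiv.toLp 2 ({i : Fin n // ¬ i = 0} → ℝ)).symm) ⁻¹' B
        = Metric.closedBall (0 : E') b \ Metric.ball (0 : E') a' := by
      ext x
      have hx : ‖x‖ ^ 2 = ∑ j, x j ^ 2 := eucl_norm_sq x
      have happ : ∀ j, ((MeasurableEquiv.toLp 2 ({i : Fin n // ¬ i = 0} → ℝ)).symm) x j = x j :=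
        fun _ => rfl
      simp only [Set.mem_preimage, Set.mem_diff, Metric.mem_closedBall, Metric.mem_ball,
        dist_zero_right, not_lt, hB, Set.mem_setOf_eq]
      have hs : ∑ j, ((MeasurableEquiv.toLp 2 ({i : Fin n // ¬ i = 0} → ℝ)).symm) x j ^ 2
          = ∑ j, x j ^ 2 := by simp [happ]
      rw [hs]
      constructor
      · rintro ⟨h1, h2⟩
        refine ⟨?_, ?_⟩
        · exact (pow_le_pow_iff_left₀ (norm_nonneg x) hb0 two_ne_zero).1 (by rw [hx]; exact h2)
        · exact (pow_le_pow_iff_left₀ ha'0 (norm_nonneg x) two_ne_zero).1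
            (by rw [hx, ha'sq]; exact h1)
      · rintro ⟨h1, h2⟩
        refine ⟨?_, ?_⟩
        · rw [← hx, ← ha'sq]; exact pow_le_pow_left₀ ha'0 h2 2
        · rw [← hx]; exact pow_le_pow_left₀ (norm_nonneg x) h1 2
    have hvol : volume B = volume (Metric.closedBall (0 : E') b \ Metric.ball (0 : E') a') := by
      rw [← hBeq]
      exact ((EuclideanSpace.volume_preserving_symm_measurableEquiv_toLp _).measure_preimage
        hmeasB.nullMeasurableSet).symm
    have hfr : Module.finrank ℝ E' = n - 1 := by
      show Module.finrank ℝ (EuclideanSpace ℝ {i : Fin n // ¬ i = 0}) = n - 1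
      rw [finrank_euclideanSpace, Fintype.card_subtype_compl]
      simp
    have hdiff : volume (Metric.closedBall (0 : E') b \ Metric.ball (0 : E') a')
        = volume (Metric.closedBall (0 : E') b) - volume (Metric.ball (0 : E') a') :=
      measure_diff (Metric.ball_subset_closedBall.trans
          (Metric.closedBall_subset_closedBall ha'b))
        measurableSet_ball.nullMeasurableSet measure_ball_lt_top.ne
    have hpow : a' ^ (n - 1) ≤ b ^ (n - 1) := pow_le_pow_left₀ ha'0 ha'b _
    rw [hvol, hdiff, Measure.addHaar_closedBall volume _ hb0, hfr]
    rcases eq_or_lt_of_le ha'0 with h0 | h0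
    · rw [← h0]
      have : (0 : ℝ) ^ (n - 1) = 0 := zero_pow (by omega)
      simp [Metric.ball_zero, this]
    · rw [Measure.addHaar_ball_of_pos volume _ h0, hfr]
      rw [tsub_le_iff_right, ← add_mul, ← ENNReal.ofReal_add (by linarith) (by positivity)]
      rw [sub_add_cancel]
  calc volume {x : EuclideanSpace ℝ (Fin n) | |(inner ℝ e x : ℝ)| ≤ w ∧ a ≤ ‖x‖ ∧ ‖x‖ ≤ b}
      ≤ volume T' := hv1
    _ = volume T'' := hv2
    _ ≤ volume A * volume B := hv3
    _ ≤ ENNReal.ofReal (2 * w) * (ENNReal.ofReal (b ^ (n - 1) - a' ^ (n - 1)) *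
        volume (Metric.ball (0 : E') 1)) := by
          rw [hvA]; exact mul_le_mul_right hvB _

/-- The slab `θ*` associated to a `1/D`-cap of the unit sphere with center `v`: the set
of vectors in the unit ball whose inner product with every direction in the cap is at
most `1/D` in absolute value. -/
def slab {n : ℕ} (v : EuclideanSpace ℝ (Fin n)) (D : ℝ) : Set (EuclideanSpace ℝ (Fin n)) :=
  {w | ‖w‖ ≤ 1 ∧ ∀ u : EuclideanSpace ℝ (Fin n), ‖u‖ = 1 → dist u v ≤ D⁻¹ →
    |(inner ℝ u w : ℝ)| ≤ D⁻¹}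

set_option maxHeartbeats 2000000 in
/-- Cover `S^{n-1}` by `1/D`-caps with `1/D`-separated centers `Θ`.  Every `ω` with
`ρ ≤ |ω| ≤ 1` (where `ρ ≥ 1/D`) lies in at most `C(n) ρ^{-n} D^{n-2}` of the slabs. -/
theorem slab_counting (n : ℕ) (hn : 2 ≤ n) :
    ∃ C > 0, ∀ (D ρ : ℝ) (Θ : Finset (EuclideanSpace ℝ (Fin n)))
      (ω : EuclideanSpace ℝ (Fin n)),
      2 ≤ D → D⁻¹ ≤ ρ →
      (∀ v ∈ Θ, ‖v‖ = 1) →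
      (∀ v ∈ Θ, ∀ w ∈ Θ, v ≠ w → D⁻¹ ≤ dist v w) →
      (∀ u : EuclideanSpace ℝ (Fin n), ‖u‖ = 1 → ∃ v ∈ Θ, dist u v ≤ D⁻¹) →
      ρ ≤ ‖ω‖ → ‖ω‖ ≤ 1 →
      ({v | v ∈ Θ ∧ ω ∈ slab v D}.ncard : ℝ) ≤ C * ρ ^ (-(n : ℤ)) * D ^ ((n : ℤ) - 2) := by
  classical
  haveI : NeZero n := ⟨by omega⟩
  set Vn := volume (Metric.ball (0 : EuclideanSpace ℝ (Fin n)) 1) with hVn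
  set Vm := volume (Metric.ball (0 : EuclideanSpace ℝ {i : Fin n // ¬ i = 0}) 1) with hVm
  have hVn0 : Vn ≠ 0 := (measure_ball_pos _ _ one_pos).ne'
  have hVntop : Vn ≠ ⊤ := measure_ball_lt_top.ne
  have hVmtop : Vm ≠ ⊤ := measure_ball_lt_top.ne
  set vn := Vn.toReal with hvn
  set vm := Vm.toReal with hvm
  have hvn0 : 0 < vn := ENNReal.toReal_pos hVn0 hVntop
  have hvm0 : 0 ≤ vm := ENNReal.toReal_nonneg
  set κ := vm / vn with hκ
  have hκ0 : 0 ≤ κ := div_nonneg hvm0 hvn0.le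
  have hκvn : κ * vn = vm := div_mul_cancel₀ _ hvn0.ne'
  have hC1 : (0:ℝ) ≤ 12 * n * 4 ^ n * κ := by
    apply mul_nonneg (by positivity) hκ0
  have hC2 : (0:ℝ) ≤ 4 * n * 4 ^ n := by positivity
  refine ⟨12 * n * 4 ^ n * κ + 4 * n * 4 ^ n + 1, by linarith, ?_⟩
  intro D ρ Θ ω hD hρD hΘ hsep hcov hρω hω1
  have hD0 : (0:ℝ) < D := by linarith
  have hDinv0 : (0:ℝ) < D⁻¹ := by positivity
  have hρ0 : (0:ℝ) < ρ := lt_of_lt_of_le hDinv0 hρD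
  have hρ1 : ρ ≤ 1 := hρω.trans hω1
  have hω0 : (0:ℝ) < ‖ω‖ := lt_of_lt_of_le hρ0 hρω
  have hωne : ω ≠ 0 := by
    intro h; rw [h, norm_zero] at hω0; exact lt_irrefl _ hω0
  set e : EuclideanSpace ℝ (Fin n) := ‖ω‖⁻¹ • ω with he_def
  have he : ‖e‖ = 1 := norm_smul_inv_norm hωne
  set F : Finset (EuclideanSpace ℝ (Fin n)) := Θ.filter (fun v => ω ∈ slab v D) with hF
  have hsetF : {v | v ∈ Θ ∧ ω ∈ slab v D} = (F : Set (EuclideanSpace ℝ (Fin n))) := by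
    ext v; simp [hF]
  rw [hsetF, Set.ncard_coe_finset]
  -- rewrite the zpow goal
  have hzp1 : ρ ^ (-(n : ℤ)) = (ρ⁻¹) ^ n := by
    rw [zpow_neg, zpow_natCast, inv_pow]
  have hzp2 : D ^ ((n : ℤ) - 2) = D ^ (n - 2) := by
    have h : (n : ℤ) - 2 = ((n - 2 : ℕ) : ℤ) := by omega
    rw [h, zpow_natCast]
  rw [hzp1, hzp2]
  have hgpos : (0:ℝ) ≤ (ρ⁻¹) ^ n * D ^ (n - 2) := by positivity
  -- basic quantities
  set δ : ℝ := D⁻¹ / 2 with hδdef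
  have hδ0 : (0:ℝ) < δ := by positivity
  have hDinvle : D⁻¹ ≤ 2⁻¹ := by
    apply inv_anti₀ (by norm_num) hD
  have hδ4 : δ ≤ 1/4 := by rw [hδdef]; linarith
  set w0 : ℝ := D⁻¹ / ρ with hw0def
  have hw00 : (0:ℝ) < w0 := by positivity
  have hw0eq : w0 = D⁻¹ * ρ⁻¹ := by rw [hw0def, div_eq_mul_inv]
  have hρinv1 : (1:ℝ) ≤ ρ⁻¹ := by
    have h := inv_anti₀ hρ0 hρ1
    simpa using h
  have hδw0 : δ ≤ w0 := by
    rw [hδdef, hw0eq]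
    have h := mul_le_mul_of_nonneg_left hρinv1 hDinv0.le
    rw [mul_one] at h
    linarith only [h, hDinv0.le]
  have hsepF : ∀ v ∈ F, ∀ u ∈ F, v ≠ u → 2 * δ ≤ dist v u := by
    intro v hv u hu hvu
    have h := hsep v (Finset.mem_filter.1 hv).1 u (Finset.mem_filter.1 hu).1 hvu
    rw [hδdef]; linarith
  have hFprop : ∀ v ∈ F, ‖v‖ = 1 ∧ |(inner ℝ e v : ℝ)| ≤ w0 := by
    intro v hv
    obtain ⟨hvΘ, hvslab⟩ := Finset.mem_filter.1 hv
    have hv1 : ‖v‖ = 1 := hΘ v hvΘ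
    have hvω : |(inner ℝ v ω : ℝ)| ≤ D⁻¹ := hvslab.2 v hv1 (by rw [dist_self]; positivity)
    have hiv : (inner ℝ e v : ℝ) = ‖ω‖⁻¹ * (inner ℝ ω v : ℝ) := by
      rw [he_def, real_inner_smul_left]
    have hωinv : ‖ω‖⁻¹ ≤ ρ⁻¹ := inv_anti₀ hρ0 hρω
    refine ⟨hv1, ?_⟩
    rw [hiv, abs_mul, abs_inv, abs_norm, real_inner_comm]
    calc ‖ω‖⁻¹ * |(inner ℝ v ω : ℝ)| ≤ ρ⁻¹ * D⁻¹ :=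
          mul_le_mul hωinv hvω (abs_nonneg _) (by positivity)
      _ = w0 := by rw [hw0eq]; ring
  have hballnorm : ∀ v ∈ F, ∀ x ∈ Metric.ball v δ, 1 - δ ≤ ‖x‖ ∧ ‖x‖ ≤ 1 + δ := by
    intro v hv x hx
    have hv1 : ‖v‖ = 1 := (hFprop v hv).1
    rw [Metric.mem_ball, dist_eq_norm] at hx
    have h1 := norm_sub_norm_le x v
    have h2 := norm_sub_norm_le v x
    rw [norm_sub_rev] at h2
    constructor <;> [linarith; linarith]
  -- the key power identity
  have hnk : n - 2 + 2 = n := by omega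
  have hDδ : D ^ (n - 2) * δ ^ n = (D⁻¹) ^ 2 / 2 ^ n := by
    have h1 : δ ^ n = (D⁻¹) ^ n / 2 ^ n := by rw [hδdef, div_pow]
    have h2 : (D⁻¹) ^ n = (D⁻¹) ^ (n - 2) * (D⁻¹) ^ 2 := by rw [← pow_add, hnk]
    have h3 : D ^ (n - 2) * (D⁻¹) ^ (n - 2) = 1 := by
      rw [← mul_pow, mul_inv_cancel₀ hD0.ne', one_pow]
    rw [h1, h2, ← mul_div_assoc]
    congr 1
    rw [← mul_assoc, h3, one_mul]
  by_cases hcase : 4 ≤ D * ρ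
  · -- main case : slab ∩ annulus
    set w : ℝ := w0 + δ with hwdef
    have hw0' : (0:ℝ) < w := by rw [hwdef]; positivity
    clear_value w
    have hw2w0 : w ≤ 2 * w0 := by rw [hwdef]; linarith
    have hDρinv : D⁻¹ * ρ⁻¹ ≤ 4⁻¹ := by
      rw [← mul_inv]
      exact inv_anti₀ (by norm_num) hcase
    have hw04 : w0 ≤ 1/4 := by rw [hw0eq]; linarith [hDρinv]
    have hwhalf : w ≤ 1/2 := by rw [hwdef]; linarith
    have hwa : w ≤ 1 - δ := by linarith
    have hsub : ∀ v ∈ F, Metric.ball v δ ⊆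
        {x : EuclideanSpace ℝ (Fin n) | |(inner ℝ e x : ℝ)| ≤ w ∧ 1 - δ ≤ ‖x‖ ∧ ‖x‖ ≤ 1 + δ} := by
      intro v hv x hx
      obtain ⟨hv1, hvw⟩ := hFprop v hv
      obtain ⟨hn1, hn2⟩ := hballnorm v hv x hx
      refine ⟨?_, hn1, hn2⟩
      have hxv : ‖x - v‖ < δ := by
        rw [Metric.mem_ball, dist_eq_norm] at hx; exact hx
      have hCS : |(inner ℝ e (x - v) : ℝ)| ≤ ‖x - v‖ := by
        calc |(inner ℝ e (x - v) : ℝ)| ≤ ‖e‖ * ‖x - v‖ := abs_real_inner_le_norm e (x - v)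
          _ = ‖x - v‖ := by rw [he, one_mul]
      have hsplit : (inner ℝ e x : ℝ) = inner ℝ e v + inner ℝ e (x - v) := by
        rw [inner_sub_right]; ring
      calc |(inner ℝ e x : ℝ)| ≤ |(inner ℝ e v : ℝ)| + |(inner ℝ e (x - v) : ℝ)| := by
            rw [hsplit]; exact abs_add_le _ _
        _ ≤ w0 + δ := by linarith
        _ = w := hwdef.symm
    have hpack := packing_le (show 1 ≤ n by omega) F hδ0 hsepF hsub
    have hsvol := slab_vol_le hn e he (w := w) (a := 1 - δ) (b := 1 + δ)
      hw0'.le (by linarith) hwa (by linarith)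
    set a' : ℝ := Real.sqrt ((1 - δ) ^ 2 - w ^ 2) with ha'def
    have haw : (0:ℝ) ≤ (1 - δ)^2 - w^2 := by nlinarith only [hwhalf, hδ4, hδ0, hw0', mul_nonneg hw0'.le (sub_nonneg.2 hwhalf), sq_nonneg δ]
    have ha'0 : 0 ≤ a' := Real.sqrt_nonneg _
    have ha'sq : a' ^ 2 = (1 - δ)^2 - w^2 := Real.sq_sqrt haw
    have ha'le : a' ≤ 1 - δ := by nlinarith only [ha'sq, ha'0, hδ4, sq_nonneg w]
    set X : ℝ := (1 + δ) ^ (n - 1) - a' ^ (n - 1) with hXdef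
    have hXnn : 0 ≤ X := by
      rw [hXdef]
      have := pow_le_pow_left₀ ha'0 (show a' ≤ 1 + δ by linarith) (n - 1)
      linarith
    have hcomb : (F.card : ℝ≥0∞) * (ENNReal.ofReal (δ ^ n) * Vn) ≤
        ENNReal.ofReal (2 * w) * (ENNReal.ofReal X * Vm) := hpack.trans hsvol
    have hreal : (F.card : ℝ) * (δ ^ n * vn) ≤ (2 * w) * (X * vm) := by
      have hfin : ENNReal.ofReal (2 * w) * (ENNReal.ofReal X * Vm) ≠ ⊤ :=
        ENNReal.mul_ne_top ENNReal.ofReal_ne_top (ENNReal.mul_ne_top ENNReal.ofReal_ne_top hVmtop)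
      have h'' := ENNReal.toReal_mono hfin hcomb
      rw [ENNReal.toReal_mul, ENNReal.toReal_mul, ENNReal.toReal_mul, ENNReal.toReal_mul,
        ENNReal.toReal_natCast, ENNReal.toReal_ofReal (by positivity),
        ENNReal.toReal_ofReal hXnn, ENNReal.toReal_ofReal (by positivity)] at h''
      exact h''
    -- now pure arithmetic
    set k := n - 2 with hk
    have hmk : n - 1 = k + 1 := by omega
    have hs1 : X ≤ ((k:ℝ) + 1) * (1 + δ) ^ k * ((1 + δ) - a') := by
      rw [hXdef, hmk]
      exact pow_sub_pow_le_aux ha'0 (by linarith) k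
    have hs2 : (1 + δ) - a' ≤ 4 * δ + w ^ 2 := by
      nlinarith only [ha'sq, ha'0, ha'le, hδ0]
    have hs3 : (1 + δ) ^ k ≤ 2 ^ k := pow_le_pow_left₀ (by linarith) (by linarith) k
    have hs4 : ((k:ℝ) + 1) ≤ (n:ℝ) := by
      have : (k:ℝ) = (n:ℝ) - 2 := by
        rw [hk]; push_cast [Nat.cast_sub (by omega : 2 ≤ n)]; ring
      rw [this]; linarith
    have hs5 : (2:ℝ) ^ k ≤ 2 ^ n := pow_le_pow_right₀ (by norm_num) (by omega)
    have hXb : X ≤ (n:ℝ) * 2 ^ n * (4 * δ + w ^ 2) := by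
      calc X ≤ ((k:ℝ) + 1) * (1 + δ) ^ k * ((1 + δ) - a') := hs1
        _ ≤ ((k:ℝ) + 1) * (1 + δ) ^ k * (4 * δ + w ^ 2) := by
            apply mul_le_mul_of_nonneg_left hs2 (by positivity)
        _ ≤ (n:ℝ) * 2 ^ n * (4 * δ + w ^ 2) := by
            have h40 : (0:ℝ) ≤ 4 * δ + w ^ 2 := by positivity
            have hA : ((k:ℝ) + 1) * (1 + δ) ^ k ≤ (n:ℝ) * 2 ^ n := by
              calc ((k:ℝ) + 1) * (1 + δ) ^ k ≤ (n:ℝ) * 2 ^ k :=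
                    mul_le_mul hs4 hs3 (by positivity) (by positivity)
                _ ≤ (n:ℝ) * 2 ^ n := mul_le_mul_of_nonneg_left hs5 (by positivity)
            exact mul_le_mul_of_nonneg_right hA h40
    have h4δ : 4 * δ = 2 * D⁻¹ := by rw [hδdef]; ring
    have hw2 : w ^ 2 ≤ 4 * w0 ^ 2 := by
      rw [hwdef]
      nlinarith only [hδw0, hδ0, hw00]
    have hpoly : 4 * w0 * (2 * D⁻¹ + 4 * w0 ^ 2) ≤ 12 * (D⁻¹) ^ 2 * (ρ⁻¹) ^ 2 := by
      rw [hw0eq]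
      have hx0 : (0:ℝ) < D⁻¹ := hDinv0
      have hy1 : (1:ℝ) ≤ ρ⁻¹ := hρinv1
      have hxy : D⁻¹ * ρ⁻¹ ≤ 4⁻¹ := hDρinv
      have hy0 : (0:ℝ) ≤ ρ⁻¹ := by linarith only [hy1]
      have h1 : (0:ℝ) ≤ D⁻¹ ^ 2 * (ρ⁻¹ * (ρ⁻¹ - 1)) := by
        have := mul_nonneg hy0 (sub_nonneg.2 hy1)
        positivity
      have h2 : (0:ℝ) ≤ D⁻¹ ^ 2 * ρ⁻¹ ^ 2 * (4⁻¹ - D⁻¹ * ρ⁻¹) := by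
        apply mul_nonneg (by positivity)
        linarith only [hxy]
      nlinarith only [h1, h2]
    have hρ2n : (ρ⁻¹) ^ 2 ≤ (ρ⁻¹) ^ n := pow_le_pow_right₀ hρinv1 hn
    have hTA : 2 * w * X ≤ 12 * n * 2 ^ n * ((ρ⁻¹) ^ n * (D⁻¹) ^ 2) := by
      calc 2 * w * X ≤ (4 * w0) * ((n:ℝ) * 2 ^ n * (4 * δ + w ^ 2)) := by
            apply mul_le_mul (by linarith) hXb hXnn (by positivity)
        _ = (n:ℝ) * 2 ^ n * (4 * w0 * (4 * δ + w ^ 2)) := by ring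
        _ ≤ (n:ℝ) * 2 ^ n * (4 * w0 * (2 * D⁻¹ + 4 * w0 ^ 2)) := by
            apply mul_le_mul_of_nonneg_left _ (by positivity)
            apply mul_le_mul_of_nonneg_left _ (by positivity)
            rw [← h4δ]
            linarith
        _ ≤ (n:ℝ) * 2 ^ n * (12 * (D⁻¹) ^ 2 * (ρ⁻¹) ^ 2) := by
            apply mul_le_mul_of_nonneg_left hpoly (by positivity)
        _ ≤ (n:ℝ) * 2 ^ n * (12 * (D⁻¹) ^ 2 * (ρ⁻¹) ^ n) := by
            apply mul_le_mul_of_nonneg_left _ (by positivity)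
            apply mul_le_mul_of_nonneg_left hρ2n (by positivity)
        _ = 12 * n * 2 ^ n * ((ρ⁻¹) ^ n * (D⁻¹) ^ 2) := by ring
    -- conclude case A
    have hfinal : (F.card : ℝ) ≤ 12 * n * 4 ^ n * κ * ((ρ⁻¹) ^ n * D ^ (n - 2)) := by
      rw [← mul_le_mul_iff_of_pos_right (show (0:ℝ) < δ ^ n * vn by positivity)]
      calc (F.card : ℝ) * (δ ^ n * vn) ≤ (2 * w) * (X * vm) := hreal
        _ = (2 * w * X) * vm := by ring
        _ ≤ (12 * n * 2 ^ n * ((ρ⁻¹) ^ n * (D⁻¹) ^ 2)) * vm :=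
            mul_le_mul_of_nonneg_right hTA hvm0
        _ = 12 * n * 4 ^ n * ((ρ⁻¹) ^ n * ((D⁻¹) ^ 2 / 2 ^ n)) * vm := by
            rw [show (4:ℝ) ^ n = 2 ^ n * 2 ^ n by rw [← mul_pow]; norm_num]
            field_simp
        _ = 12 * n * 4 ^ n * ((ρ⁻¹) ^ n * (D ^ (n-2) * δ ^ n)) * vm := by rw [hDδ]
        _ = 12 * n * 4 ^ n * κ * ((ρ⁻¹) ^ n * D ^ (n - 2)) * (δ ^ n * vn) := by
            rw [← hκvn]; ring
    calc (F.card : ℝ) ≤ 12 * n * 4 ^ n * κ * ((ρ⁻¹) ^ n * D ^ (n - 2)) := hfinal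
      _ ≤ (12 * n * 4 ^ n * κ + 4 * n * 4 ^ n + 1) * ((ρ⁻¹) ^ n * D ^ (n - 2)) := by
          apply mul_le_mul_of_nonneg_right (by linarith) hgpos
      _ = (12 * n * 4 ^ n * κ + 4 * n * 4 ^ n + 1) * (ρ⁻¹) ^ n * D ^ (n - 2) := by ring
  · -- easy case : plain annulus
    push_neg at hcase
    have hsub : ∀ v ∈ F, Metric.ball v δ ⊆
        Metric.closedBall (0 : EuclideanSpace ℝ (Fin n)) (1 + δ) \
          Metric.ball (0 : EuclideanSpace ℝ (Fin n)) (1 - δ) := by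
      intro v hv x hx
      obtain ⟨hn1, hn2⟩ := hballnorm v hv x hx
      constructor
      · rw [Metric.mem_closedBall, dist_zero_right]; exact hn2
      · rw [Metric.mem_ball, dist_zero_right]; push_neg; exact hn1
    have hpack := packing_le (show 1 ≤ n by omega) F hδ0 hsepF hsub
    haveI : Nontrivial (EuclideanSpace ℝ (Fin n)) := by infer_instance
    have hannulus : volume (Metric.closedBall (0 : EuclideanSpace ℝ (Fin n)) (1 + δ) \
        Metric.ball (0 : EuclideanSpace ℝ (Fin n)) (1 - δ)) ≤
        ENNReal.ofReal ((1 + δ) ^ n - (1 - δ) ^ n) * Vn := by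
      have hss : Metric.ball (0 : EuclideanSpace ℝ (Fin n)) (1 - δ) ⊆
          Metric.closedBall (0 : EuclideanSpace ℝ (Fin n)) (1 + δ) :=
        Metric.ball_subset_closedBall.trans
          (Metric.closedBall_subset_closedBall (by linarith))
      rw [measure_diff hss measurableSet_ball.nullMeasurableSet measure_ball_lt_top.ne,
        Measure.addHaar_closedBall volume _ (by linarith : (0:ℝ) ≤ 1 + δ),
        Measure.addHaar_ball_of_pos volume _ (by linarith : (0:ℝ) < 1 - δ),
        finrank_euclideanSpace_fin]
      have hple : (1 - δ) ^ n ≤ (1 + δ) ^ n :=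
        pow_le_pow_left₀ (by linarith) (by linarith) n
      rw [tsub_le_iff_right, ← add_mul,
        ← ENNReal.ofReal_add (by linarith) (pow_nonneg (by linarith) n), sub_add_cancel]
    have hcomb := hpack.trans hannulus
    have hreal : (F.card : ℝ) * (δ ^ n * vn) ≤ ((1 + δ) ^ n - (1 - δ) ^ n) * vn := by
      have hfin : ENNReal.ofReal ((1 + δ) ^ n - (1 - δ) ^ n) * Vn ≠ ⊤ :=
        ENNReal.mul_ne_top ENNReal.ofReal_ne_top hVntop
      have h'' := ENNReal.toReal_mono hfin hcomb
      have hple : (1 - δ) ^ n ≤ (1 + δ) ^ n :=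
        pow_le_pow_left₀ (by linarith) (by linarith) n
      rw [ENNReal.toReal_mul, ENNReal.toReal_mul, ENNReal.toReal_mul,
        ENNReal.toReal_natCast, ENNReal.toReal_ofReal (by positivity),
        ENNReal.toReal_ofReal (by linarith)] at h''
      exact h''
    have hcard : (F.card : ℝ) * δ ^ n ≤ (1 + δ) ^ n - (1 - δ) ^ n := by
      have := (mul_le_mul_iff_of_pos_right hvn0).1 (by
        calc (F.card : ℝ) * δ ^ n * vn = (F.card : ℝ) * (δ ^ n * vn) := by ring
          _ ≤ ((1 + δ) ^ n - (1 - δ) ^ n) * vn := hreal)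
      exact this
    have hm1 : n - 1 + 1 = n := by omega
    have hupper : (1 + δ) ^ n - (1 - δ) ^ n ≤ (n:ℝ) * 2 ^ (n - 1) * (2 * δ) := by
      have h := pow_sub_pow_le_aux (show (0:ℝ) ≤ 1 - δ by linarith)
        (show (1:ℝ) - δ ≤ 1 + δ by linarith) (n - 1)
      rw [hm1] at h
      have hkle : ((n - 1 : ℕ) : ℝ) + 1 ≤ (n : ℝ) := by
        push_cast [Nat.cast_sub (by omega : 1 ≤ n)]; linarith
      have hple : (1 + δ) ^ (n - 1) ≤ 2 ^ (n - 1) :=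
        pow_le_pow_left₀ (by linarith) (by linarith) _
      calc (1 + δ) ^ n - (1 - δ) ^ n
          ≤ (((n - 1 : ℕ) : ℝ) + 1) * (1 + δ) ^ (n - 1) * ((1 + δ) - (1 - δ)) := h
        _ ≤ (n:ℝ) * 2 ^ (n - 1) * (2 * δ) := by
            have : (1 + δ) - (1 - δ) = 2 * δ := by ring
            rw [this]
            apply mul_le_mul_of_nonneg_right _ (by positivity)
            exact mul_le_mul hkle hple (by positivity) (by positivity)
    -- D ≤ 4 ρ⁻¹ ≤ 4 (ρ⁻¹)^n
    have hD4 : D ≤ 4 * ρ⁻¹ := by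
      have h := hcase.le
      rw [← mul_le_mul_iff_of_pos_right hρ0]
      calc D * ρ ≤ 4 := h
        _ = 4 * ρ⁻¹ * ρ := by field_simp
    have hρn : ρ⁻¹ ≤ (ρ⁻¹) ^ n := by
      calc ρ⁻¹ = (ρ⁻¹) ^ 1 := (pow_one _).symm
        _ ≤ (ρ⁻¹) ^ n := pow_le_pow_right₀ hρinv1 (by omega)
    have hD8 : (1:ℝ) ≤ 8 * (ρ⁻¹) ^ n * D⁻¹ := by
      have hDD : D * D⁻¹ = 1 := mul_inv_cancel₀ hD0.ne'
      have hrn0 : (0:ℝ) ≤ (ρ⁻¹) ^ n := by positivity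
      have h1 : D ≤ 8 * (ρ⁻¹) ^ n := by linarith only [hD4, hρn, hrn0]
      have h2 := mul_le_mul_of_nonneg_right h1 hDinv0.le
      linarith only [h2, hDD]
    have hfinal : (F.card : ℝ) ≤ 4 * n * 4 ^ n * ((ρ⁻¹) ^ n * D ^ (n - 2)) := by
      rw [← mul_le_mul_iff_of_pos_right (show (0:ℝ) < δ ^ n by positivity)]
      have hδval : (n:ℝ) * 2 ^ (n-1) * (2 * δ) = (n:ℝ) * 2 ^ (n-1) * D⁻¹ := by
        rw [hδdef]; ring
      calc (F.card : ℝ) * δ ^ n ≤ (1 + δ) ^ n - (1 - δ) ^ n := hcard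
        _ ≤ (n:ℝ) * 2 ^ (n - 1) * (2 * δ) := hupper
        _ = (n:ℝ) * 2 ^ (n - 1) * D⁻¹ := hδval
        _ ≤ (n:ℝ) * 2 ^ (n - 1) * D⁻¹ * (8 * (ρ⁻¹) ^ n * D⁻¹) := by
            have hP : (0:ℝ) ≤ (n:ℝ) * 2 ^ (n - 1) * D⁻¹ := by positivity
            have h := mul_le_mul_of_nonneg_left hD8 hP
            rw [mul_one] at h
            exact h
        _ = 8 * n * 2 ^ (n - 1) * ((ρ⁻¹) ^ n * (D⁻¹) ^ 2) := by ring
        _ ≤ 4 * n * 4 ^ n * ((ρ⁻¹) ^ n * ((D⁻¹) ^ 2 / 2 ^ n)) := by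
            have h2n : (4:ℝ) ^ n / 2 ^ n = 2 ^ n := by
              rw [show (4:ℝ) ^ n = 2 ^ n * 2 ^ n by rw [← mul_pow]; norm_num]
              field_simp
            have h2n1 : (2:ℝ) ^ (n - 1) * 2 ≤ 2 ^ n * 1 := by
              rw [← pow_succ, hm1]; linarith
            have hb : (0:ℝ) ≤ (ρ⁻¹) ^ n * (D⁻¹) ^ 2 := by positivity
            have expand : 4 * (n:ℝ) * 4 ^ n * ((ρ⁻¹) ^ n * ((D⁻¹) ^ 2 / 2 ^ n))
                = 4 * n * (4 ^ n / 2 ^ n) * ((ρ⁻¹) ^ n * (D⁻¹) ^ 2) := by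
              field_simp
            rw [expand, h2n]
            have : (8:ℝ) * n * 2 ^ (n-1) ≤ 4 * n * 2 ^ n := by
              have h := mul_le_mul_of_nonneg_left h2n1 (by positivity : (0:ℝ) ≤ 4 * (n:ℝ))
              nlinarith only [h]
            exact mul_le_mul_of_nonneg_right this hb
        _ = 4 * n * 4 ^ n * ((ρ⁻¹) ^ n * (D ^ (n - 2) * δ ^ n)) := by rw [hDδ]
        _ = 4 * n * 4 ^ n * ((ρ⁻¹) ^ n * D ^ (n - 2)) * δ ^ n := by ring
    calc (F.card : ℝ) ≤ 4 * n * 4 ^ n * ((ρ⁻¹) ^ n * D ^ (n - 2)) := hfinal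
      _ ≤ (12 * n * 4 ^ n * κ + 4 * n * 4 ^ n + 1) * ((ρ⁻¹) ^ n * D ^ (n - 2)) := by
          apply mul_le_mul_of_nonneg_right (by linarith) hgpos
      _ = (12 * n * 4 ^ n * κ + 4 * n * 4 ^ n + 1) * (ρ⁻¹) ^ n * D ^ (n - 2) := by ring
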